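/- It is decidable, given a closed μωT_s-expression t of syntactic category T over Σ, whether the language |t| denoted by t consists of well-ordered words only. -/

import Mathlib

/-! ## Countable words over an alphabet -/

/-- A "preword" over `A`: a countable linear order realized as a set of rationals,
together with a labeling of its elements by letters of `A`. -/
structure PreWord (A : Type) : Type where
  carrier : Set ℚ
  label : carrier → A

namespace PreWord

/-- Two prewords are equivalent iff there is an order isomorphism between their
carriers preserving the labels. -/
def Equiv {A : Type} (u v : PreWord A) : Prop :=
  ∃ f : u.carrier ≃o v.carrier, ∀ q, v.label (f q) = u.label q

theorem Equiv.refl {A : Type} (u : PreWord A) : Equiv u u :=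
  ⟨OrderIso.refl _, fun _ => rfl⟩

theorem Equiv.symm {A : Type} {u v : PreWord A} : Equiv u v → Equiv v u := by
  rintro ⟨f, hf⟩
  exact ⟨f.symm, fun q => by rw [← hf (f.symm q), OrderIso.apply_symm_apply]⟩

theorem Equiv.trans {A : Type} {u v w : PreWord A} : Equiv u v → Equiv v w → Equiv u w := by
  rintro ⟨f, hf⟩ ⟨g, hg⟩
  exact ⟨f.trans g, fun q => by rw [OrderIso.trans_apply, hg, hf]⟩

instance setoid (A : Type) : Setoid (PreWord A) where
  r := Equiv
  iseqv := ⟨Equiv.refl, Equiv.symm, Equiv.trans⟩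

end PreWord

/-- A countable word over `A`: an isomorphism class of labeled countable linear orders. -/
def Word (A : Type) : Type := Quotient (PreWord.setoid A)

namespace Word

/-- The word determined by an arbitrary countable linear order `I` with labeling `lab`. -/
noncomputable def of {I A : Type} [LinearOrder I] [Countable I] (lab : I → A) : Word A :=
  let e : I ↪o ℚ := (Order.embedding_from_countable_to_dense I ℚ).some
  Quotient.mk _ ⟨Set.range e, fun q => lab (Classical.choose q.2)⟩

/-- The empty word. -/
def eps (A : Type) : Word A :=
  Quotient.mk _ ⟨∅, fun q => absurd q.2 (Set.notMem_empty q.1)⟩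

/-- The one-letter word. -/
def letter {A : Type} (a : A) : Word A :=
  Quotient.mk _ ⟨{(0 : ℚ)}, fun _ => a⟩

/-- Relabeling of a word along a function. -/
noncomputable def map {A B : Type} (g : A → B) (w : Word A) : Word B :=
  Quotient.mk _ ⟨(Quotient.out w).carrier, fun q => g ((Quotient.out w).label q)⟩

instance sigmaLexCountable {I : Type} (κ : I → Type) [Countable I] [∀ i, Countable (κ i)] :
    Countable (Σₗ i, κ i) :=
  inferInstanceAs (Countable (Σ i, κ i))

/-- Generalized concatenation `∏_{i ∈ I} w i` of words over a countable linear order `I`: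
the word on the lexicographically ordered disjoint sum of the underlying orders. -/
noncomputable def concat {I A : Type} [LinearOrder I] [Countable I] (w : I → Word A) : Word A :=
  Word.of (I := Σₗ i : I, (Quotient.out (w i)).carrier)
    (fun p => (Quotient.out (w (ofLex p).1)).label (ofLex p).2)

/-- Binary concatenation of words. -/
noncomputable def append {A : Type} (u v : Word A) : Word A :=
  concat (I := Fin 2) ![u, v]

/-- The finite word given by a list of letters. -/
noncomputable def ofList {A : Type} (l : List A) : Word A :=
  Word.of (I := Fin l.length) l.get

/-- Concatenation of a finite list of words. -/
noncomputable def concatList {A : Type} (l : List (Word A)) : Word A :=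
  concat (I := Fin l.length) l.get

/-- A word is scattered if its underlying linear order has no suborder isomorphic to `ℚ`,
equivalently there is no order embedding of `ℚ` into it. -/
def IsScattered {A : Type} (w : Word A) : Prop :=
  IsEmpty (ℚ ↪o (Quotient.out w).carrier)

/-- A word is well-ordered if its underlying linear order has no suborder isomorphic to the
negative integers, i.e. there is no order embedding of `ℕᵒᵈ` into it. -/
def IsWellOrdered {A : Type} (w : Word A) : Prop :=
  IsEmpty (ℕᵒᵈ ↪o (Quotient.out w).carrier)

end Word

/-! ## Languages and their operations -/

namespace Lang

/-- Concatenation of languages. -/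
noncomputable def conc {A : Type} (L₁ L₂ : Set (Word A)) : Set (Word A) :=
  {w | ∃ u ∈ L₁, ∃ v ∈ L₂, w = Word.append u v}

/-- ω-power of a language: `L^ω = {∏_{i∈ℕ} w i : ∀ i, w i ∈ L}`. -/
noncomputable def omegaPow {A : Type} (L : Set (Word A)) : Set (Word A) :=
  {w | ∃ f : ℕ → Word A, (∀ i, f i ∈ L) ∧ w = Word.concat f}

end Lang
/-! ## Pairs of words and their operations -/

namespace PairLang

/-- Product of pairs of words: `(u,v)·(u',v') = (uu', v'v)`. -/
noncomputable def pairMul {A : Type} (p q : Word A × Word A) : Word A × Word A :=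
  (Word.append p.1 q.1, Word.append q.2 p.2)

/-- Concatenation of sets of pairs of words. -/
noncomputable def conc {A : Type} (L L' : Set (Word A × Word A)) : Set (Word A × Word A) :=
  {r | ∃ p ∈ L, ∃ q ∈ L', r = pairMul p q}

/-- Kleene star of a set of pairs of words: `L^* = {(ε,ε)} ∪ L ∪ L·L ∪ ⋯`. -/
noncomputable def star {A : Type} (L : Set (Word A × Word A)) : Set (Word A × Word A) :=
  {r | ∃ l : List (Word A × Word A), (∀ p ∈ l, p ∈ L) ∧
        r = l.foldr pairMul (Word.eps A, Word.eps A)}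

instance sumLexCountable : Countable (ℕ ⊕ₗ ℕᵒᵈ) :=
  inferInstanceAs (Countable (ℕ ⊕ ℕᵒᵈ))

/-- The word `∏_{i∈ℕ}(u_i, v_i) = (u₀u₁⋯)(⋯v₁v₀)`: the concatenation of the first
components in increasing order of `i` followed by the second components in decreasing
order of `i`. -/
noncomputable def omegaWord {A : Type} (f : ℕ → Word A × Word A) : Word A :=
  Word.concat (I := ℕ ⊕ₗ ℕᵒᵈ)
    (fun i => Sum.elim (fun n : ℕ => (f n).1)
      (fun n : ℕᵒᵈ => (f (OrderDual.ofDual n)).2) (ofLex i))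

/-- ω-power of a set of pairs of words, a language of words. -/
noncomputable def omegaPow {A : Type} (L : Set (Word A × Word A)) : Set (Word A) :=
  {w | ∃ f : ℕ → Word A × Word A, (∀ i, f i ∈ L) ∧ w = omegaWord f}

/-- `L₁ × L₂ = {(u,v) : u ∈ L₁, v ∈ L₂}`. -/
def prod {A : Type} (L₁ L₂ : Set (Word A)) : Set (Word A × Word A) :=
  {p | p.1 ∈ L₁ ∧ p.2 ∈ L₂}

end PairLang
/-! ## μωT_s-expressions -/

mutual
  /-- `μωT_s`-expressions of syntactic category `T` over the alphabet `A`: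
  `T ::= a | ε | x | T+T | T·T | μx.T | P^ω`. -/
  inductive TS (A : Type) : Type
    | letter : A → TS A
    | eps : TS A
    | var : ℕ → TS A
    | add : TS A → TS A → TS A
    | mul : TS A → TS A → TS A
    | mu : ℕ → TS A → TS A
    | omega : PS A → TS A

  /-- `μωT_s`-expressions of syntactic category `P` over the alphabet `A`:
  `P ::= T×T | P+P | P·P | P^*`. -/
  inductive PS (A : Type) : Type
    | pair : TS A → TS A → PS A
    | add : PS A → PS A → PS A
    | mul : PS A → PS A → PS A
    | star : PS A → PS A
end

mutual
  /-- The free variables of a `T`-expression. -/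
  def TS.free {A : Type} : TS A → Set ℕ
    | .letter _ => ∅
    | .eps => ∅
    | .var x => {x}
    | .add s t => s.free ∪ t.free
    | .mul s t => s.free ∪ t.free
    | .mu x s => s.free \ {x}
    | .omega p => p.free

  /-- The free variables of a `P`-expression. -/
  def PS.free {A : Type} : PS A → Set ℕ
    | .pair s t => s.free ∪ t.free
    | .add p q => p.free ∪ q.free
    | .mul p q => p.free ∪ q.free
    | .star p => p.free
end

mutual
  /-- The language denoted by a `T`-expression in the environment `ρ`. -/
  noncomputable def TS.den {A : Type} : TS A → (ℕ → Set (Word A)) → Set (Word A)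
    | .letter a, _ => {Word.letter a}
    | .eps, _ => {Word.eps A}
    | .var x, ρ => ρ x
    | .add s t, ρ => s.den ρ ∪ t.den ρ
    | .mul s t, ρ => Lang.conc (s.den ρ) (t.den ρ)
    | .mu x s, ρ => sInf {L : Set (Word A) | s.den (Function.update ρ x L) ⊆ L}
    | .omega p, ρ => PairLang.omegaPow (p.den ρ)

  /-- The set of pairs of words denoted by a `P`-expression in the environment `ρ`. -/
  noncomputable def PS.den {A : Type} : PS A → (ℕ → Set (Word A)) → Set (Word A × Word A)
    | .pair s t, ρ => PairLang.prod (s.den ρ) (t.den ρ)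
    | .add p q, ρ => p.den ρ ∪ q.den ρ
    | .mul p q, ρ => PairLang.conc (p.den ρ) (q.den ρ)
    | .star p, ρ => PairLang.star (p.den ρ)
end

mutual
  /-- The `T`-subexpressions of a `T`-expression. -/
  def TS.subT {A : Type} : TS A → Set (TS A)
    | .letter a => {.letter a}
    | .eps => {.eps}
    | .var x => {.var x}
    | .add s t => insert (.add s t) (s.subT ∪ t.subT)
    | .mul s t => insert (.mul s t) (s.subT ∪ t.subT)
    | .mu x s => insert (.mu x s) s.subT
    | .omega p => insert (.omega p) p.subT

  /-- The `T`-subexpressions of a `P`-expression. -/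
  def PS.subT {A : Type} : PS A → Set (TS A)
    | .pair s t => s.subT ∪ t.subT
    | .add p q => p.subT ∪ q.subT
    | .mul p q => p.subT ∪ q.subT
    | .star p => p.subT
end

mutual
  /-- The `P`-subexpressions of a `T`-expression. -/
  def TS.subP {A : Type} : TS A → Set (PS A)
    | .letter _ => ∅
    | .eps => ∅
    | .var _ => ∅
    | .add s t => s.subP ∪ t.subP
    | .mul s t => s.subP ∪ t.subP
    | .mu _ s => s.subP
    | .omega p => insert p p.subP

  /-- The `P`-subexpressions of a `P`-expression. -/
  def PS.subP {A : Type} : PS A → Set (PS A)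
    | .pair s t => insert (.pair s t) (s.subP ∪ t.subP)
    | .add p q => insert (.add p q) (p.subP ∪ q.subP)
    | .mul p q => insert (.mul p q) (p.subP ∪ q.subP)
    | .star p => insert (.star p) p.subP
end

mutual
  /-- Relabeling the letters of a `T`-expression. -/
  def TS.map {A B : Type} (g : A → B) : TS A → TS B
    | .letter a => .letter (g a)
    | .eps => .eps
    | .var x => .var x
    | .add s t => .add (s.map g) (t.map g)
    | .mul s t => .mul (s.map g) (t.map g)
    | .mu x s => .mu x (s.map g)
    | .omega p => .omega (p.map g)

  /-- Relabeling the letters of a `P`-expression. -/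
  def PS.map {A B : Type} (g : A → B) : PS A → PS B
    | .pair s t => .pair (s.map g) (t.map g)
    | .add p q => .add (p.map g) (q.map g)
    | .mul p q => .mul (p.map g) (q.map g)
    | .star p => .star (p.map g)
end
/-! ## A concrete encoding of `μωT_s`-expressions by natural numbers -/

mutual
  /-- A concrete injective code of `T`-expressions by natural numbers. -/
  def TS.code {A : Type} [Encodable A] : TS A → ℕ
    | .letter a => Nat.pair 0 (Encodable.encode a)
    | .eps => Nat.pair 1 0
    | .var x => Nat.pair 2 x
    | .add s t => Nat.pair 3 (Nat.pair s.code t.code)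
    | .mul s t => Nat.pair 4 (Nat.pair s.code t.code)
    | .mu x s => Nat.pair 5 (Nat.pair x s.code)
    | .omega p => Nat.pair 6 p.code

  /-- A concrete injective code of `P`-expressions by natural numbers. -/
  def PS.code {A : Type} [Encodable A] : PS A → ℕ
    | .pair s t => Nat.pair 7 (Nat.pair s.code t.code)
    | .add p q => Nat.pair 8 (Nat.pair p.code q.code)
    | .mul p q => Nat.pair 9 (Nat.pair p.code q.code)
    | .star p => Nat.pair 10 p.code
end



/-- No strictly descending `ℕ`-indexed sequence. -/
def NoDesc (X : Type*) [Preorder X] : Prop := ¬ ∃ y : ℕ → X, StrictAnti y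

theorem nat_no_strictAnti {y : ℕ → ℕ} (h : StrictAnti y) : False := by
  have key : ∀ k, y k + k ≤ y 0 := by
    intro k
    induction k with
    | zero => omega
    | succ k ih => have h2 : y (k+1) < y k := h (by omega); omega
  have := key (y 0 + 1); omega

theorem noDesc_of_isEmpty {X : Type*} [Preorder X] [IsEmpty X] : NoDesc X :=
  fun ⟨y, _⟩ => isEmptyElim (y 0)

theorem noDesc_of_subsingleton {X : Type*} [Preorder X] (h : Subsingleton X) : NoDesc X := by
  rintro ⟨y, hy⟩
  exact absurd (h.elim (y 1) (y 0)) (ne_of_lt (hy Nat.zero_lt_one))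

theorem isEmpty_dualEmb_iff {X : Type*} [Preorder X] :
    IsEmpty (ℕᵒᵈ ↪o X) ↔ NoDesc X := by
  constructor
  · rintro ⟨he⟩ ⟨y, hy⟩
    exact he (OrderEmbedding.ofStrictMono (fun n : ℕᵒᵈ => y (OrderDual.ofDual n))
      (fun a b hab => hy hab))
  · intro h
    constructor
    intro e
    exact h ⟨fun n => e (OrderDual.toDual n), fun a b hab => e.strictMono hab⟩

theorem noDesc_congr {X Y : Type*} [Preorder X] [Preorder Y] (f : X ≃o Y) :
    NoDesc X ↔ NoDesc Y := by
  constructor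
  · rintro h ⟨y, hy⟩
    exact h ⟨fun n => f.symm (y n), f.symm.strictMono.comp_strictAnti hy⟩
  · rintro h ⟨y, hy⟩
    exact h ⟨fun n => f (y n), f.strictMono.comp_strictAnti hy⟩

section Sigma

variable {I : Type} [LinearOrder I] {κ : I → Type} [∀ i, LinearOrder (κ i)]

theorem lex_fst_le {p q : Σₗ i, κ i} (h : p < q) : p.1 ≤ q.1 := by
  rcases Sigma.Lex.lt_def.1 h with h1 | ⟨h1, -⟩
  · exact le_of_lt h1
  · exact le_of_eq h1

theorem lex_snd_lt {i : I} {p q : Σₗ i, κ i} (h : p < q) (hp : p.1 = i) (hq : q.1 = i) :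
    (hp ▸ p.2 : κ i) < hq ▸ q.2 := by
  obtain ⟨pi, px⟩ := p
  obtain ⟨qi, qx⟩ := q
  dsimp at hp hq
  subst hp; subst hq
  rcases Sigma.Lex.lt_def.1 h with h1 | ⟨h1, h2⟩
  · exact absurd h1 (lt_irrefl _)
  · cases h1; exact h2

theorem sigma_desc_iff :
    (∃ F : ℕ → Σₗ i, κ i, StrictAnti F) ↔
      (∃ i, ∃ y : ℕ → κ i, StrictAnti y) ∨
        (∃ g : ℕ → I, StrictAnti g ∧ ∀ n, Nonempty (κ (g n))) := by
  constructor
  · rintro ⟨F, hF⟩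
    set a : ℕ → I := fun n => (F n).1 with ha
    by_cases hc : ∀ n, ∃ m, a m < a n
    · right
      choose nxt hnxt using hc
      let r : ℕ → ℕ := fun k => Nat.rec 0 (fun _ prev => nxt prev) k
      refine ⟨fun k => a (r k), strictAnti_nat_of_succ_lt (fun k => hnxt (r k)), fun k => ⟨(F (r k)).2⟩⟩
    · left
      push_neg at hc
      obtain ⟨n₀, hn₀⟩ := hc
      have hmono : ∀ {n m : ℕ}, n < m → F m < F n := fun h => hF h
      have hconst : ∀ k, a (n₀ + k) = a n₀ := by
        intro k
        rcases Nat.eq_zero_or_pos k with rfl | hk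
        · rfl
        · have h1 : a (n₀ + k) ≤ a n₀ := lex_fst_le (hmono (by omega))
          exact le_antisymm h1 (hn₀ _)
      refine ⟨a n₀, fun k => (hconst k) ▸ (F (n₀ + k)).2, ?_⟩
      intro k l hkl
      have hlt : F (n₀ + l) < F (n₀ + k) := hmono (by omega)
      exact lex_snd_lt hlt (hconst l) (hconst k)
  · rintro (⟨i, y, hy⟩ | ⟨g, hg, hne⟩)
    · refine ⟨fun n => toLex ⟨i, y n⟩, ?_⟩
      intro n m hnm
      exact Sigma.Lex.lt_def.2 (Or.inr ⟨rfl, hy hnm⟩)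
    · refine ⟨fun n => toLex ⟨g n, (hne n).some⟩, ?_⟩
      intro n m hnm
      exact Sigma.Lex.lt_def.2 (Or.inl (hg hnm))

theorem noDesc_sigma_iff :
    NoDesc (Σₗ i, κ i) ↔
      (∀ i, NoDesc (κ i)) ∧
        ¬ (∃ g : ℕ → I, StrictAnti g ∧ ∀ n, Nonempty (κ (g n))) := by
  unfold NoDesc
  rw [sigma_desc_iff]
  push_neg
  tauto

omit [LinearOrder I] [(i : I) → LinearOrder (κ i)] in
theorem isEmpty_lex_sigma_iff :
    IsEmpty (Σₗ i, κ i) ↔ ∀ i, IsEmpty (κ i) :=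
  isEmpty_sigma

end Sigma

section Words

variable {A : Type}

/-- The order isomorphism between `X` and the range of an order embedding. -/
noncomputable def rangeIso {X : Type} [Preorder X] (e : X ↪o ℚ) : X ≃o Set.range e where
  toEquiv := Equiv.ofInjective e e.injective
  map_rel_iff' := by
    intro a b
    simp only [Equiv.ofInjective, Equiv.coe_fn_mk, Subtype.mk_le_mk]
    exact e.le_iff_le

theorem of_out_iso {I : Type} [LinearOrder I] [Countable I] (lab : I → A) :
    Nonempty ((Quotient.out (Word.of lab)).carrier ≃o I) := by
  obtain ⟨f, -⟩ := Quotient.exact (Quotient.out_eq (Word.of lab))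
  exact ⟨f.trans (rangeIso _).symm⟩

theorem isWellOrdered_iff_noDesc (w : Word A) :
    w.IsWellOrdered ↔ NoDesc (Quotient.out w).carrier := isEmpty_dualEmb_iff

theorem of_wellOrdered_iff {I : Type} [LinearOrder I] [Countable I] (lab : I → A) :
    (Word.of lab).IsWellOrdered ↔ NoDesc I := by
  obtain ⟨f⟩ := of_out_iso lab
  rw [isWellOrdered_iff_noDesc, noDesc_congr f]

theorem eq_eps_iff (w : Word A) :
    w = Word.eps A ↔ IsEmpty (Quotient.out w).carrier := by
  constructor
  · rintro rfl
    obtain ⟨f, -⟩ := Quotient.exact (Quotient.out_eq (Word.eps A))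
    exact f.toEquiv.isEmpty_congr.mpr (Set.isEmpty_coe_sort.mpr rfl)
  · intro h
    rw [← Quotient.out_eq w]
    apply Quotient.sound
    have h2 : IsEmpty ((∅ : Set ℚ) : Type) := Set.isEmpty_coe_sort.mpr rfl
    refine ⟨⟨@Equiv.equivOfIsEmpty _ _ h h2, ?_⟩, ?_⟩
    · intro a b
      exact isEmptyElim a
    · intro q
      exact isEmptyElim q

theorem of_eq_eps_iff {I : Type} [LinearOrder I] [Countable I] (lab : I → A) :
    Word.of lab = Word.eps A ↔ IsEmpty I := by
  rw [eq_eps_iff]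
  obtain ⟨f⟩ := of_out_iso lab
  exact f.toEquiv.isEmpty_congr

theorem eps_wellOrdered : (Word.eps A).IsWellOrdered := by
  rw [isWellOrdered_iff_noDesc]
  have h : IsEmpty (Quotient.out (Word.eps A)).carrier := (eq_eps_iff _).1 rfl
  exact @noDesc_of_isEmpty _ _ h

theorem letter_wellOrdered (a : A) : (Word.letter a).IsWellOrdered := by
  rw [isWellOrdered_iff_noDesc]
  obtain ⟨f, -⟩ := Quotient.exact (Quotient.out_eq (Word.letter a))
  rw [noDesc_congr f]
  apply noDesc_of_subsingleton
  constructor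
  rintro ⟨x, hx⟩ ⟨y, hy⟩
  simp only [Set.mem_singleton_iff] at hx hy
  exact Subtype.ext (hx.trans hy.symm)

theorem letter_ne_eps (a : A) : Word.letter a ≠ Word.eps A := by
  rw [Ne, eq_eps_iff]
  obtain ⟨f, -⟩ := Quotient.exact (Quotient.out_eq (Word.letter a))
  intro h
  exact h.elim (f.symm ⟨(0 : ℚ), Set.mem_singleton _⟩)

theorem concat_wellOrdered_iff {I : Type} [LinearOrder I] [Countable I] (w : I → Word A) :
    (Word.concat w).IsWellOrdered ↔
      (∀ i, (w i).IsWellOrdered) ∧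
        ¬ ∃ g : ℕ → I, StrictAnti g ∧ ∀ n, Nonempty ((Quotient.out (w (g n))).carrier) := by
  unfold Word.concat
  rw [of_wellOrdered_iff, noDesc_sigma_iff]
  simp only [isWellOrdered_iff_noDesc]

theorem concat_eq_eps_iff {I : Type} [LinearOrder I] [Countable I] (w : I → Word A) :
    Word.concat w = Word.eps A ↔ ∀ i, w i = Word.eps A := by
  unfold Word.concat
  rw [of_eq_eps_iff, isEmpty_lex_sigma_iff]
  simp only [eq_eps_iff]

theorem append_wellOrdered_iff (u v : Word A) :
    (Word.append u v).IsWellOrdered ↔ u.IsWellOrdered ∧ v.IsWellOrdered := by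
  unfold Word.append
  rw [concat_wellOrdered_iff]
  constructor
  · rintro ⟨h, -⟩
    exact ⟨by simpa using h 0, by simpa using h 1⟩
  · rintro ⟨hu, hv⟩
    refine ⟨?_, ?_⟩
    · intro i; fin_cases i <;> simpa
    · rintro ⟨g, hg, -⟩
      have hanti : StrictAnti (fun n => ((g n : Fin 2) : ℕ)) := by
        intro n m hnm
        exact Fin.lt_def.1 (hg hnm)
      exact nat_no_strictAnti hanti

theorem append_eq_eps_iff (u v : Word A) :
    Word.append u v = Word.eps A ↔ u = Word.eps A ∧ v = Word.eps A := by
  unfold Word.append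
  rw [concat_eq_eps_iff]
  constructor
  · intro h
    exact ⟨by simpa using h 0, by simpa using h 1⟩
  · rintro ⟨h0, h1⟩ i
    fin_cases i <;> simpa

theorem forall_lexsum {P : ℕ ⊕ₗ ℕᵒᵈ → Prop} :
    (∀ i, P i) ↔
      (∀ n : ℕ, P (toLex (Sum.inl n))) ∧ (∀ n : ℕ, P (toLex (Sum.inr (OrderDual.toDual n)))) := by
  constructor
  · exact fun h => ⟨fun n => h _, fun n => h _⟩
  · rintro ⟨h1, h2⟩ i
    have hi : i = toLex (ofLex i) := rfl
    rw [hi]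
    rcases (ofLex i) with n | n
    · exact h1 n
    · exact h2 (OrderDual.ofDual n)

theorem omegaWord_wo_fst {f : ℕ → Word A × Word A}
    (h : (PairLang.omegaWord f).IsWellOrdered) (n : ℕ) : (f n).1.IsWellOrdered := by
  unfold PairLang.omegaWord at h
  rw [concat_wellOrdered_iff] at h
  exact h.1 (toLex (Sum.inl n))

theorem omegaWord_not_wo {u v : Word A} (h : v ≠ Word.eps A) :
    ¬ (PairLang.omegaWord (fun _ => (u, v))).IsWellOrdered := by
  unfold PairLang.omegaWord
  rw [concat_wellOrdered_iff]
  rintro ⟨-, hg⟩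
  apply hg
  refine ⟨fun n => toLex (Sum.inr (OrderDual.toDual n)), ?_, ?_⟩
  · intro n m hnm
    exact Sum.Lex.inr_lt_inr_iff.2 (OrderDual.toDual_lt_toDual.2 hnm)
  · intro n
    have hne : ¬ IsEmpty (Quotient.out v).carrier := fun hE => h ((eq_eps_iff v).2 hE)
    exact not_isEmpty_iff.1 hne

theorem omegaWord_wo {f : ℕ → Word A × Word A}
    (h : ∀ n, (f n).1.IsWellOrdered ∧ (f n).2 = Word.eps A) :
    (PairLang.omegaWord f).IsWellOrdered := by
  unfold PairLang.omegaWord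
  rw [concat_wellOrdered_iff]
  constructor
  · rw [forall_lexsum]
    refine ⟨fun n => (h n).1, fun n => ?_⟩
    show ((f n).2).IsWellOrdered
    rw [(h n).2]
    exact eps_wellOrdered
  · rintro ⟨g, hg, hne⟩
    have hinl : ∀ n, ∃ m, g n = toLex (Sum.inl m) := by
      intro n
      rcases hsum : ofLex (g n) with m | m
      · exact ⟨m, by rw [← hsum]; rfl⟩
      · exfalso
        have h2 := hne n
        have hE : IsEmpty (Quotient.out ((f (OrderDual.ofDual m)).2)).carrier :=
          (eq_eps_iff _).1 (h _).2
        have hrw : g n = toLex (Sum.inr m) := by rw [← hsum]; rfl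
        rw [hrw] at h2
        exact hE.false h2.some
    choose m hm using hinl
    have hanti : StrictAnti m := by
      intro n k hnk
      have hlt := hg hnk
      rw [hm n, hm k] at hlt
      exact Sum.Lex.inl_lt_inl_iff.1 hlt
    exact nat_no_strictAnti hanti

theorem omegaWord_eq_eps_iff (f : ℕ → Word A × Word A) :
    PairLang.omegaWord f = Word.eps A ↔ ∀ n, (f n).1 = Word.eps A ∧ (f n).2 = Word.eps A := by
  unfold PairLang.omegaWord
  rw [concat_eq_eps_iff]
  constructor
  · intro h n
    exact ⟨h (toLex (Sum.inl n)), h (toLex (Sum.inr (OrderDual.toDual n)))⟩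
  · intro h
    rw [forall_lexsum]
    exact ⟨fun n => (h n).1, fun n => (h n).2⟩

end Words
/-! ### The abstract domain of boolean triples -/

section AbstractDomain

/-- Abstract value: (nonempty?, all-well-ordered?, all-empty-word?). -/
abbrev B3 : Type := Bool × Bool × Bool

def aBot : B3 := (false, true, true)
def aLetter : B3 := (true, true, false)
def aEpsA : B3 := (true, true, true)
def aAdd (a b : B3) : B3 := (a.1 || b.1, a.2.1 && b.2.1, a.2.2 && b.2.2)
def aMul (a b : B3) : B3 :=
  (a.1 && b.1, !a.1 || !b.1 || (a.2.1 && b.2.1), !a.1 || !b.1 || (a.2.2 && b.2.2))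
def aPair (a b : B3) : B3 :=
  (a.1 && b.1, !a.1 || !b.1 || (a.2.1 && b.2.2), !a.1 || !b.1 || (a.2.2 && b.2.2))
def aStar (a : B3) : B3 := (true, a.2.1, a.2.2)
def aOmega (a : B3) : B3 := (a.1, a.2.1, !a.1 || a.2.2)

/-- The information order on abstract values. -/
def ble (a b : B3) : Prop :=
  (a.1 = true → b.1 = true) ∧ (b.2.1 = true → a.2.1 = true) ∧ (b.2.2 = true → a.2.2 = true)

instance (a b : B3) : Decidable (ble a b) := by unfold ble; infer_instance

theorem ble_refl (a : B3) : ble a a := ⟨id, id, id⟩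

theorem ble_trans {a b c : B3} (h1 : ble a b) (h2 : ble b c) : ble a c :=
  ⟨fun h => h2.1 (h1.1 h), fun h => h1.2.1 (h2.2.1 h), fun h => h1.2.2 (h2.2.2 h)⟩

theorem ble_antisymm : ∀ a b : B3, ble a b → ble b a → a = b := by decide

theorem ble_bot : ∀ a : B3, ble aBot a := by decide

theorem aAdd_mono : ∀ a a' b b' : B3, ble a a' → ble b b' → ble (aAdd a b) (aAdd a' b') := by
  decide

theorem aMul_mono : ∀ a a' b b' : B3, ble a a' → ble b b' → ble (aMul a b) (aMul a' b') := by
  decide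

theorem aPair_mono : ∀ a a' b b' : B3, ble a a' → ble b b' → ble (aPair a b) (aPair a' b') := by
  decide

theorem aStar_mono : ∀ a a' : B3, ble a a' → ble (aStar a) (aStar a') := by decide

theorem aOmega_mono : ∀ a a' : B3, ble a a' → ble (aOmega a) (aOmega a') := by decide

def rnk3 (a : B3) : ℕ := (cond a.1 1 0) + (cond a.2.1 0 1) + (cond a.2.2 0 1)

theorem rnk3_le_three : ∀ a : B3, rnk3 a ≤ 3 := by decide

theorem rnk3_lt : ∀ a b : B3, ble a b → a ≠ b → rnk3 a < rnk3 b := by decide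

/-- Four-fold iteration from the bottom element; reaches the least fixed point of any
monotone map on `B3`. -/
def aIterate (G : B3 → B3) : B3 := G (G (G (G aBot)))

theorem aIterate_fixed {G : B3 → B3} (hm : ∀ a b, ble a b → ble (G a) (G b)) :
    G (aIterate G) = aIterate G := by
  let c : ℕ → B3 := fun k => Nat.rec aBot (fun _ b => G b) k
  have hsucc : ∀ k, c (k + 1) = G (c k) := fun k => rfl
  have hchain : ∀ k, ble (c k) (c (k + 1)) := by
    intro k
    induction k with
    | zero => exact ble_bot _
    | succ k ih => exact hm _ _ ih
  have hstab : ∀ k, c k = c (k + 1) → ∀ j, c (k + j) = c k := by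
    intro k hk j
    induction j with
    | zero => rfl
    | succ j ih =>
      have h1 : c (k + (j + 1)) = G (c (k + j)) := rfl
      rw [h1, ih, ← hsucc, ← hk]
  have hiter : aIterate G = c 4 := rfl
  have hgoal : G (c 4) = c 4 := by
    rcases Classical.em (∃ k < 5, c k = c (k + 1)) with hex | hex
    · obtain ⟨k, hk5, hk⟩ := hex
      have h4 : c 4 = c k := by
        have := hstab k hk (4 - k)
        by_cases hk4 : k ≤ 4
        · rwa [show k + (4 - k) = 4 by omega] at this
        · interval_cases k <;> omega
      have h5 : c 5 = c k := by
        have := hstab k hk (5 - k)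
        rwa [show k + (5 - k) = 5 by omega] at this
      show c 5 = c 4
      rw [h4, h5]
    · push_neg at hex
      have hrnk3 : ∀ k, k ≤ 4 → k ≤ rnk3 (c k) := by
        intro k hk
        induction k with
        | zero => omega
        | succ k ih =>
          have h1 := rnk3_lt _ _ (hchain k) (hex k (by omega))
          have h2 := ih (by omega)
          omega
      have h1 := hrnk3 4 (by omega)
      have h2 := rnk3_le_three (c 4)
      omega
  rw [hiter]
  exact hgoal

end AbstractDomain

/-! ### The abstract evaluator -/

mutual
  /-- Abstract evaluation of a `T`-expression. -/
  def TS.aeval {A : Type} : TS A → (ℕ → B3) → B3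
    | .letter _, _ => aLetter
    | .eps, _ => aEpsA
    | .var x, σ => σ x
    | .add s t, σ => aAdd (s.aeval σ) (t.aeval σ)
    | .mul s t, σ => aMul (s.aeval σ) (t.aeval σ)
    | .mu x s, σ => aIterate (fun b => s.aeval (Function.update σ x b))
    | .omega p, σ => aOmega (p.aeval σ)

  /-- Abstract evaluation of a `P`-expression. -/
  def PS.aeval {A : Type} : PS A → (ℕ → B3) → B3
    | .pair s t, σ => aPair (s.aeval σ) (t.aeval σ)
    | .add p q, σ => aAdd (p.aeval σ) (q.aeval σ)
    | .mul p q, σ => aMul (p.aeval σ) (q.aeval σ)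
    | .star p, σ => aStar (p.aeval σ)
end

mutual
  theorem TS.aeval_mono {A : Type} (t : TS A) :
      ∀ σ σ' : ℕ → B3, (∀ x, ble (σ x) (σ' x)) → ble (t.aeval σ) (t.aeval σ') := by
    cases t with
    | letter a => intro σ σ' h; exact ble_refl _
    | eps => intro σ σ' h; exact ble_refl _
    | var x => intro σ σ' h; simpa [TS.aeval] using h x
    | add s t =>
      intro σ σ' h
      simp only [TS.aeval]
      exact aAdd_mono _ _ _ _ (TS.aeval_mono s σ σ' h) (TS.aeval_mono t σ σ' h)
    | mul s t =>
      intro σ σ' h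
      simp only [TS.aeval]
      exact aMul_mono _ _ _ _ (TS.aeval_mono s σ σ' h) (TS.aeval_mono t σ σ' h)
    | mu x s =>
      intro σ σ' h
      simp only [TS.aeval]
      have key : ∀ b b', ble b b' →
          ble (s.aeval (Function.update σ x b)) (s.aeval (Function.update σ' x b')) := by
        intro b b' hb
        apply TS.aeval_mono s
        intro y
        by_cases hy : y = x
        · subst hy; simpa [Function.update_self] using hb
        · simpa [Function.update_of_ne hy] using h y
      exact key _ _ (key _ _ (key _ _ (key _ _ (ble_refl aBot))))
    | omega p =>
      intro σ σ' h
      simp only [TS.aeval]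
      exact aOmega_mono _ _ (PS.aeval_mono p σ σ' h)

  theorem PS.aeval_mono {A : Type} (p : PS A) :
      ∀ σ σ' : ℕ → B3, (∀ x, ble (σ x) (σ' x)) → ble (p.aeval σ) (p.aeval σ') := by
    cases p with
    | pair s t =>
      intro σ σ' h
      simp only [PS.aeval]
      exact aPair_mono _ _ _ _ (TS.aeval_mono s σ σ' h) (TS.aeval_mono t σ σ' h)
    | add p q =>
      intro σ σ' h
      simp only [PS.aeval]
      exact aAdd_mono _ _ _ _ (PS.aeval_mono p σ σ' h) (PS.aeval_mono q σ σ' h)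
    | mul p q =>
      intro σ σ' h
      simp only [PS.aeval]
      exact aMul_mono _ _ _ _ (PS.aeval_mono p σ σ' h) (PS.aeval_mono q σ σ' h)
    | star p =>
      intro σ σ' h
      simp only [PS.aeval]
      exact aStar_mono _ _ (PS.aeval_mono p σ σ' h)
end
/-! ### Compatibility between concrete languages and abstract values -/

section Compat

variable {A : Type}

theorem mem_conc {L1 L2 : Set (Word A)} {w : Word A} :
    w ∈ Lang.conc L1 L2 ↔ ∃ u ∈ L1, ∃ v ∈ L2, w = Word.append u v := Iff.rfl

theorem mem_pconc {P Q : Set (Word A × Word A)} {r : Word A × Word A} :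
    r ∈ PairLang.conc P Q ↔ ∃ p ∈ P, ∃ q ∈ Q, r = PairLang.pairMul p q := Iff.rfl

theorem mem_pstar {P : Set (Word A × Word A)} {r : Word A × Word A} :
    r ∈ PairLang.star P ↔ ∃ l : List (Word A × Word A), (∀ p ∈ l, p ∈ P) ∧
      r = l.foldr PairLang.pairMul (Word.eps A, Word.eps A) := Iff.rfl

theorem mem_pomega {P : Set (Word A × Word A)} {w : Word A} :
    w ∈ PairLang.omegaPow P ↔
      ∃ f : ℕ → Word A × Word A, (∀ i, f i ∈ P) ∧ w = PairLang.omegaWord f := Iff.rfl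

theorem mem_pprod {L1 L2 : Set (Word A)} {p : Word A × Word A} :
    p ∈ PairLang.prod L1 L2 ↔ p.1 ∈ L1 ∧ p.2 ∈ L2 := Iff.rfl

/-- Compatibility of a language with an abstract value. -/
def RL (L : Set (Word A)) (b : B3) : Prop :=
  (L.Nonempty ↔ b.1 = true) ∧ ((∀ w ∈ L, w.IsWellOrdered) ↔ b.2.1 = true) ∧
    ((∀ w ∈ L, w = Word.eps A) ↔ b.2.2 = true)

/-- Compatibility of a set of pairs with an abstract value. -/
def RP (P : Set (Word A × Word A)) (b : B3) : Prop :=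
  (P.Nonempty ↔ b.1 = true) ∧
    ((∀ p ∈ P, p.1.IsWellOrdered ∧ p.2 = Word.eps A) ↔ b.2.1 = true) ∧
    ((∀ p ∈ P, p.1 = Word.eps A ∧ p.2 = Word.eps A) ↔ b.2.2 = true)

/-- The (noncomputable) exact abstraction of a language. -/
noncomputable def alphaL (L : Set (Word A)) : B3 :=
  (@decide L.Nonempty (Classical.propDecidable _),
   @decide (∀ w ∈ L, w.IsWellOrdered) (Classical.propDecidable _),
   @decide (∀ w ∈ L, w = Word.eps A) (Classical.propDecidable _))

theorem RL_alpha (L : Set (Word A)) : RL L (alphaL L) := by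
  refine ⟨?_, ?_, ?_⟩ <;> simp [alphaL]

theorem bool_eq_of_iff {a b : Bool} (h : (a = true) ↔ (b = true)) : a = b := by
  cases a <;> cases b <;> simp_all

theorem RL_unique {L : Set (Word A)} {b b' : B3} (h : RL L b) (h' : RL L b') : b = b' := by
  obtain ⟨h1, h2, h3⟩ := h
  obtain ⟨g1, g2, g3⟩ := h'
  obtain ⟨x, y, z⟩ := b
  obtain ⟨x', y', z'⟩ := b'
  have e1 := bool_eq_of_iff (h1.symm.trans g1)
  have e2 := bool_eq_of_iff (h2.symm.trans g2)
  have e3 := bool_eq_of_iff (h3.symm.trans g3)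
  simp_all

/-- Environment compatibility. -/
def REnv (ρ : ℕ → Set (Word A)) (σ : ℕ → B3) : Prop := ∀ x, RL (ρ x) (σ x)

theorem REnv_update {ρ : ℕ → Set (Word A)} {σ : ℕ → B3} (h : REnv ρ σ) {L : Set (Word A)}
    {b : B3} (hL : RL L b) (x : ℕ) :
    REnv (Function.update ρ x L) (Function.update σ x b) := by
  intro y
  by_cases hy : y = x
  · subst hy; simpa [Function.update_self] using hL
  · simpa [Function.update_of_ne hy] using h y

theorem and_bool {a b : Bool} {Pa Pb : Prop} (ha : Pa ↔ a = true) (hb : Pb ↔ b = true) :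
    (Pa ∧ Pb) ↔ (a && b) = true := by
  rw [ha, hb]; cases a <;> cases b <;> simp

theorem or_bool {a b : Bool} {Pa Pb : Prop} (ha : Pa ↔ a = true) (hb : Pb ↔ b = true) :
    (Pa ∨ Pb) ↔ (a || b) = true := by
  rw [ha, hb]; cases a <;> cases b <;> simp

theorem or3_bool {a b c : Bool} {Pa Pb Pc : Prop} (ha : Pa ↔ a = true) (hb : Pb ↔ b = true)
    (hc : Pc ↔ c = true) : (¬Pa ∨ ¬Pb ∨ Pc) ↔ (!a || !b || c) = true := by
  rw [ha, hb, hc]; cases a <;> cases b <;> cases c <;> simp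

theorem notor_bool {a c : Bool} {Pa Pc : Prop} (ha : Pa ↔ a = true) (hc : Pc ↔ c = true) :
    (¬Pa ∨ Pc) ↔ (!a || c) = true := by
  rw [ha, hc]; cases a <;> cases c <;> simp

theorem forall2_iff {α β : Type} {L1 : Set α} {L2 : Set β} {P : α → Prop} {Q : β → Prop} :
    (∀ u ∈ L1, ∀ v ∈ L2, P u ∧ Q v) ↔
      (¬ L1.Nonempty ∨ ¬ L2.Nonempty ∨ ((∀ u ∈ L1, P u) ∧ (∀ v ∈ L2, Q v))) := by
  rcases Classical.em L1.Nonempty with h1 | h1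
  · rcases Classical.em L2.Nonempty with h2 | h2
    · obtain ⟨u0, hu0⟩ := h1
      obtain ⟨v0, hv0⟩ := h2
      constructor
      · intro h
        exact Or.inr (Or.inr ⟨fun u hu => (h u hu v0 hv0).1, fun v hv => (h u0 hu0 v hv).2⟩)
      · rintro (h | h | ⟨hP, hQ⟩) u hu v hv
        · exact absurd ⟨u, hu⟩ h
        · exact absurd ⟨v, hv⟩ h
        · exact ⟨hP u hu, hQ v hv⟩
    · constructor
      · intro _; exact Or.inr (Or.inl h2)
      · intro _ u hu v hv; exact absurd ⟨v, hv⟩ h2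
  · constructor
    · intro _; exact Or.inl h1
    · intro _ u hu; exact absurd ⟨u, hu⟩ h1

end Compat

/-! ### Monotonicity of the concrete semantics in the environment -/

mutual
  theorem TS.den_mono {A : Type} (t : TS A) :
      ∀ ρ ρ' : ℕ → Set (Word A), (∀ x, ρ x ⊆ ρ' x) → t.den ρ ⊆ t.den ρ' := by
    cases t with
    | letter a => intro ρ ρ' h; simp only [TS.den]; exact subset_rfl
    | eps => intro ρ ρ' h; simp only [TS.den]; exact subset_rfl
    | var x => intro ρ ρ' h; simpa only [TS.den] using h x
    | add s t =>
      intro ρ ρ' h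
      simp only [TS.den]
      exact Set.union_subset_union (TS.den_mono s ρ ρ' h) (TS.den_mono t ρ ρ' h)
    | mul s t =>
      intro ρ ρ' h
      simp only [TS.den]
      rintro w ⟨u, hu, v, hv, rfl⟩
      exact ⟨u, TS.den_mono s ρ ρ' h hu, v, TS.den_mono t ρ ρ' h hv, rfl⟩
    | mu x s =>
      intro ρ ρ' h
      simp only [TS.den]
      apply sInf_le_sInf
      intro L hL
      have h1 : s.den (Function.update ρ x L) ⊆ s.den (Function.update ρ' x L) := by
        apply TS.den_mono s
        intro y
        by_cases hy : y = x
        · subst hy; simp [Function.update_self]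
        · simpa [Function.update_of_ne hy] using h y
      exact h1.trans hL
    | omega p =>
      intro ρ ρ' h
      simp only [TS.den]
      rintro w ⟨f, hf, rfl⟩
      exact ⟨f, fun i => PS.den_mono p ρ ρ' h (hf i), rfl⟩

  theorem PS.den_mono {A : Type} (p : PS A) :
      ∀ ρ ρ' : ℕ → Set (Word A), (∀ x, ρ x ⊆ ρ' x) → p.den ρ ⊆ p.den ρ' := by
    cases p with
    | pair s t =>
      intro ρ ρ' h
      simp only [PS.den]
      rintro r ⟨h1, h2⟩
      exact ⟨TS.den_mono s ρ ρ' h h1, TS.den_mono t ρ ρ' h h2⟩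
    | add p q =>
      intro ρ ρ' h
      simp only [PS.den]
      exact Set.union_subset_union (PS.den_mono p ρ ρ' h) (PS.den_mono q ρ ρ' h)
    | mul p q =>
      intro ρ ρ' h
      simp only [PS.den]
      rintro r ⟨a, ha, b, hb, rfl⟩
      exact ⟨a, PS.den_mono p ρ ρ' h ha, b, PS.den_mono q ρ ρ' h hb, rfl⟩
    | star p =>
      intro ρ ρ' h
      simp only [PS.den]
      rintro r ⟨l, hl, rfl⟩
      exact ⟨l, fun q hq => PS.den_mono p ρ ρ' h (hl q hq), rfl⟩
end
/-! ### Exactness at fixed points -/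

section MuCase

variable {A : Type}

theorem mu_case (s : TS A) (x : ℕ) (ρ : ℕ → Set (Word A)) (σ : ℕ → B3)
    (hex : ∀ ρ' σ', REnv ρ' σ' → RL (s.den ρ') (s.aeval σ'))
    (h : REnv ρ σ) :
    RL (sInf {L : Set (Word A) | s.den (Function.update ρ x L) ⊆ L})
      (aIterate (fun b => s.aeval (Function.update σ x b))) := by
  have hΦmono : ∀ L L' : Set (Word A), L ⊆ L' →
      s.den (Function.update ρ x L) ⊆ s.den (Function.update ρ x L') := by
    intro L L' hLL
    apply TS.den_mono s
    intro y
    by_cases hy : y = x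
    · subst hy; simpa [Function.update_self] using hLL
    · simp [Function.update_of_ne hy]
  have hGmono : ∀ a b : B3, ble a b →
      ble (s.aeval (Function.update σ x a)) (s.aeval (Function.update σ x b)) := by
    intro a b hab
    apply TS.aeval_mono s
    intro y
    by_cases hy : y = x
    · subst hy; simpa [Function.update_self] using hab
    · simp [Function.update_of_ne hy, ble_refl]
  set S : Set (Set (Word A)) := {L : Set (Word A) | s.den (Function.update ρ x L) ⊆ L} with hS
  have hmemS : ∀ L : Set (Word A), L ∈ S ↔ s.den (Function.update ρ x L) ⊆ L := fun L => Iff.rfl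
  have hpre : s.den (Function.update ρ x (sInf S)) ⊆ sInf S := by
    intro w hw
    rw [Set.sInf_eq_sInter, Set.mem_sInter]
    intro L hL
    have h1 : sInf S ⊆ L := sInf_le hL
    exact ((hmemS L).1 hL) (hΦmono _ _ h1 hw)
  have hfix : s.den (Function.update ρ x (sInf S)) = sInf S := by
    refine Set.Subset.antisymm hpre ?_
    apply sInf_le
    exact (hmemS _).2 (hΦmono _ _ hpre)
  have hGfix := aIterate_fixed hGmono
  have hexact : ∀ (L : Set (Word A)) (b : B3), RL L b →
      RL (s.den (Function.update ρ x L)) (s.aeval (Function.update σ x b)) :=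
    fun L b hLb => hex _ _ (REnv_update h hLb x)
  have halpha : RL (sInf S) (alphaL (sInf S)) := RL_alpha _
  have hGalpha : s.aeval (Function.update σ x (alphaL (sInf S))) = alphaL (sInf S) := by
    have h1 := hexact _ _ halpha
    have h2 : RL (s.den (Function.update ρ x (sInf S)))
        (alphaL (s.den (Function.update ρ x (sInf S)))) := RL_alpha _
    rw [RL_unique h1 h2, hfix]
  have hdir1 : ble (aIterate (fun b => s.aeval (Function.update σ x b))) (alphaL (sInf S)) := by
    have key : ∀ b : B3, ble b (alphaL (sInf S)) →
        ble (s.aeval (Function.update σ x b)) (alphaL (sInf S)) := by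
      intro b hb
      have h1 := hGmono _ _ hb
      rwa [hGalpha] at h1
    exact key _ (key _ (key _ (key _ (ble_bot _))))
  set bstar : B3 := aIterate (fun b => s.aeval (Function.update σ x b)) with hbstar
  have hin : ∀ L : Set (Word A),
      (∀ w ∈ L, bstar.1 = true ∧ (bstar.2.1 = true → w.IsWellOrdered) ∧
        (bstar.2.2 = true → w = Word.eps A)) → ble (alphaL L) bstar := by
    intro L hLγ
    obtain ⟨a1, a2, a3⟩ := RL_alpha L
    refine ⟨?_, ?_, ?_⟩
    · intro hh
      obtain ⟨w, hw⟩ := a1.2 hh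
      exact (hLγ w hw).1
    · intro hh
      exact a2.1 (fun w hw => (hLγ w hw).2.1 hh)
    · intro hh
      exact a3.1 (fun w hw => (hLγ w hw).2.2 hh)
  have hsub : ∀ w ∈ sInf S, bstar.1 = true ∧ (bstar.2.1 = true → w.IsWellOrdered) ∧
      (bstar.2.2 = true → w = Word.eps A) := by
    set γ : Set (Word A) := {w : Word A | bstar.1 = true ∧ (bstar.2.1 = true → w.IsWellOrdered) ∧
      (bstar.2.2 = true → w = Word.eps A)} with hγ
    have hkey : sInf S ⊆ Set.inter (sInf S) γ := by
      apply sInf_le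
      rw [hmemS]
      have hmono' : s.den (Function.update ρ x (Set.inter (sInf S) γ)) ⊆
          s.den (Function.update ρ x (sInf S)) := hΦmono _ _ Set.inter_subset_left
      have hble' : ble (alphaL (Set.inter (sInf S) γ)) bstar := by
        apply hin
        intro w hw
        exact hw.2
      have hstep := hexact _ _ (RL_alpha (Set.inter (sInf S) γ))
      have hble2 : ble (s.aeval (Function.update σ x (alphaL (Set.inter (sInf S) γ)))) bstar := by
        have h1 := hGmono _ _ hble'
        rwa [hGfix] at h1
      intro w hw
      refine ⟨hpre (hmono' hw), ?_, ?_, ?_⟩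
      · exact hble2.1 (hstep.1.1 ⟨w, hw⟩)
      · intro hh
        exact (hstep.2.1.2 (hble2.2.1 hh)) w hw
      · intro hh
        exact (hstep.2.2.2 (hble2.2.2 hh)) w hw
    intro w hw
    exact (hkey hw).2
  have hdir2 : ble (alphaL (sInf S)) bstar := hin _ hsub
  have hbeq : bstar = alphaL (sInf S) := ble_antisymm _ _ hdir1 hdir2
  rw [hbeq]
  exact halpha

end MuCase
section StarFold

variable {A : Type}

theorem star_fold_H {P : Set (Word A × Word A)}
    (hP : ∀ q ∈ P, q.1.IsWellOrdered ∧ q.2 = Word.eps A) :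
    ∀ l : List (Word A × Word A), (∀ q ∈ l, q ∈ P) →
      (l.foldr PairLang.pairMul (Word.eps A, Word.eps A)).1.IsWellOrdered ∧
        (l.foldr PairLang.pairMul (Word.eps A, Word.eps A)).2 = Word.eps A := by
  intro l
  induction l with
  | nil => intro _; exact ⟨eps_wellOrdered, rfl⟩
  | cons q l ih =>
    intro hl
    have hq := hP q (hl q (List.mem_cons_self))
    have ihl := ih (fun p hp => hl p (List.mem_cons_of_mem _ hp))
    simp only [List.foldr_cons, PairLang.pairMul]
    exact ⟨(append_wellOrdered_iff _ _).2 ⟨hq.1, ihl.1⟩,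
      (append_eq_eps_iff _ _).2 ⟨ihl.2, hq.2⟩⟩

theorem star_fold_B {P : Set (Word A × Word A)}
    (hP : ∀ q ∈ P, q.1 = Word.eps A ∧ q.2 = Word.eps A) :
    ∀ l : List (Word A × Word A), (∀ q ∈ l, q ∈ P) →
      (l.foldr PairLang.pairMul (Word.eps A, Word.eps A)).1 = Word.eps A ∧
        (l.foldr PairLang.pairMul (Word.eps A, Word.eps A)).2 = Word.eps A := by
  intro l
  induction l with
  | nil => intro _; exact ⟨rfl, rfl⟩
  | cons q l ih =>
    intro hl
    have hq := hP q (hl q (List.mem_cons_self))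
    have ihl := ih (fun p hp => hl p (List.mem_cons_of_mem _ hp))
    simp only [List.foldr_cons, PairLang.pairMul]
    exact ⟨(append_eq_eps_iff _ _).2 ⟨hq.1, ihl.1⟩,
      (append_eq_eps_iff _ _).2 ⟨ihl.2, hq.2⟩⟩

end StarFold

/-! ### The main exactness theorem -/

set_option maxHeartbeats 1000000 in
mutual
  theorem TS.exact {A : Type} (t : TS A) :
      ∀ (ρ : ℕ → Set (Word A)) (σ : ℕ → B3), REnv ρ σ → RL (t.den ρ) (t.aeval σ) := by
    cases t with
    | letter a =>
      intro ρ σ h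
      simp only [TS.den, TS.aeval, aLetter]
      refine ⟨?_, ?_, ?_⟩
      · simp
      · simp [letter_wellOrdered a]
      · simp [letter_ne_eps a]
    | eps =>
      intro ρ σ h
      simp only [TS.den, TS.aeval, aEpsA]
      refine ⟨?_, ?_, ?_⟩
      · simp
      · simp [eps_wellOrdered]
      · simp
    | var x =>
      intro ρ σ h
      simpa only [TS.den, TS.aeval] using h x
    | add s t =>
      intro ρ σ h
      obtain ⟨n1, w1, e1⟩ := TS.exact s ρ σ h
      obtain ⟨n2, w2, e2⟩ := TS.exact t ρ σ h
      simp only [TS.den, TS.aeval, aAdd]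
      refine ⟨?_, ?_, ?_⟩
      · rw [← or_bool n1 n2, Set.union_nonempty]
      · rw [← and_bool w1 w2]
        constructor
        · intro hall
          exact ⟨fun w hw => hall w (Or.inl hw), fun w hw => hall w (Or.inr hw)⟩
        · rintro ⟨ha, hb⟩ w (hw | hw)
          · exact ha w hw
          · exact hb w hw
      · rw [← and_bool e1 e2]
        constructor
        · intro hall
          exact ⟨fun w hw => hall w (Or.inl hw), fun w hw => hall w (Or.inr hw)⟩
        · rintro ⟨ha, hb⟩ w (hw | hw)
          · exact ha w hw
          · exact hb w hw
    | mul s t =>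
      intro ρ σ h
      obtain ⟨n1, w1, e1⟩ := TS.exact s ρ σ h
      obtain ⟨n2, w2, e2⟩ := TS.exact t ρ σ h
      simp only [TS.den, TS.aeval, aMul]
      refine ⟨?_, ?_, ?_⟩
      · rw [← and_bool n1 n2]
        constructor
        · rintro ⟨w, u, hu, v, hv, rfl⟩
          exact ⟨⟨u, hu⟩, ⟨v, hv⟩⟩
        · rintro ⟨⟨u, hu⟩, ⟨v, hv⟩⟩
          exact ⟨_, u, hu, v, hv, rfl⟩
      · rw [← or3_bool n1 n2 (and_bool w1 w2), ← forall2_iff]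
        constructor
        · intro hall u hu v hv
          exact (append_wellOrdered_iff u v).1 (hall _ ⟨u, hu, v, hv, rfl⟩)
        · rintro hall w ⟨u, hu, v, hv, rfl⟩
          exact (append_wellOrdered_iff u v).2 (hall u hu v hv)
      · rw [← or3_bool n1 n2 (and_bool e1 e2), ← forall2_iff]
        constructor
        · intro hall u hu v hv
          exact (append_eq_eps_iff u v).1 (hall _ ⟨u, hu, v, hv, rfl⟩)
        · rintro hall w ⟨u, hu, v, hv, rfl⟩
          exact (append_eq_eps_iff u v).2 (hall u hu v hv)
    | mu x s =>
      intro ρ σ h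
      simp only [TS.den, TS.aeval]
      exact mu_case s x ρ σ (TS.exact s) h
    | omega p =>
      intro ρ σ h
      obtain ⟨hn, hH, hB⟩ := PS.exact p ρ σ h
      simp only [TS.den, TS.aeval, aOmega]
      have hne_iff : (PairLang.omegaPow (p.den ρ)).Nonempty ↔ (p.den ρ).Nonempty := by
        constructor
        · rintro ⟨w, f, hf, rfl⟩
          exact ⟨f 0, hf 0⟩
        · rintro ⟨q, hq⟩
          exact ⟨_, fun _ => q, fun _ => hq, rfl⟩
      refine ⟨?_, ?_, ?_⟩
      · rw [← hn]
        exact hne_iff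
      · rw [← hH]
        constructor
        · intro hwo q hq
          obtain ⟨u, v⟩ := q
          have hmem : PairLang.omegaWord (fun _ => (u, v)) ∈ PairLang.omegaPow (p.den ρ) :=
            ⟨fun _ => (u, v), fun _ => hq, rfl⟩
          have hw := hwo _ hmem
          refine ⟨omegaWord_wo_fst hw 0, ?_⟩
          by_contra hne
          exact omegaWord_not_wo hne hw
        · rintro hH' w ⟨f, hf, rfl⟩
          exact omegaWord_wo (fun n => hH' _ (hf n))
      · rw [← notor_bool hn hB]
        constructor
        · intro hall
          rcases Classical.em (p.den ρ).Nonempty with hne | hne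
          · right
            intro q hq
            obtain ⟨u, v⟩ := q
            have := hall _ ⟨fun _ => (u, v), fun _ => hq, rfl⟩
            exact (omegaWord_eq_eps_iff _).1 this 0
          · left; exact hne
        · rintro (hne | hB') w ⟨f, hf, rfl⟩
          · exact absurd ⟨f 0, hf 0⟩ hne
          · rw [omegaWord_eq_eps_iff]
            intro n
            exact hB' _ (hf n)

  theorem PS.exact {A : Type} (p : PS A) :
      ∀ (ρ : ℕ → Set (Word A)) (σ : ℕ → B3), REnv ρ σ → RP (p.den ρ) (p.aeval σ) := by
    cases p with
    | pair s t =>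
      intro ρ σ h
      obtain ⟨n1, w1, e1⟩ := TS.exact s ρ σ h
      obtain ⟨n2, w2, e2⟩ := TS.exact t ρ σ h
      simp only [PS.den, PS.aeval, aPair]
      refine ⟨?_, ?_, ?_⟩
      · rw [← and_bool n1 n2]
        constructor
        · rintro ⟨⟨qu, qv⟩, h1, h2⟩
          exact ⟨⟨qu, h1⟩, ⟨qv, h2⟩⟩
        · rintro ⟨⟨u, hu⟩, ⟨v, hv⟩⟩
          exact ⟨(u, v), hu, hv⟩
      · rw [← or3_bool n1 n2 (and_bool w1 e2), ← forall2_iff]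
        constructor
        · intro hall u hu v hv
          exact hall (u, v) ⟨hu, hv⟩
        · rintro hall ⟨u, v⟩ ⟨hu, hv⟩
          exact hall u hu v hv
      · rw [← or3_bool n1 n2 (and_bool e1 e2), ← forall2_iff]
        constructor
        · intro hall u hu v hv
          exact hall (u, v) ⟨hu, hv⟩
        · rintro hall ⟨u, v⟩ ⟨hu, hv⟩
          exact hall u hu v hv
    | add p q =>
      intro ρ σ h
      obtain ⟨n1, w1, e1⟩ := PS.exact p ρ σ h
      obtain ⟨n2, w2, e2⟩ := PS.exact q ρ σ h
      simp only [PS.den, PS.aeval, aAdd]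
      refine ⟨?_, ?_, ?_⟩
      · rw [← or_bool n1 n2, Set.union_nonempty]
      · rw [← and_bool w1 w2]
        constructor
        · intro hall
          exact ⟨fun r hr => hall r (Or.inl hr), fun r hr => hall r (Or.inr hr)⟩
        · rintro ⟨ha, hb⟩ r (hr | hr)
          · exact ha r hr
          · exact hb r hr
      · rw [← and_bool e1 e2]
        constructor
        · intro hall
          exact ⟨fun r hr => hall r (Or.inl hr), fun r hr => hall r (Or.inr hr)⟩
        · rintro ⟨ha, hb⟩ r (hr | hr)
          · exact ha r hr
          · exact hb r hr
    | mul p q =>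
      intro ρ σ h
      obtain ⟨n1, w1, e1⟩ := PS.exact p ρ σ h
      obtain ⟨n2, w2, e2⟩ := PS.exact q ρ σ h
      simp only [PS.den, PS.aeval, aMul]
      have hpm : ∀ a b : Word A × Word A,
          ((PairLang.pairMul a b).1.IsWellOrdered ∧ (PairLang.pairMul a b).2 = Word.eps A) ↔
            ((a.1.IsWellOrdered ∧ a.2 = Word.eps A) ∧ (b.1.IsWellOrdered ∧ b.2 = Word.eps A)) := by
        intro a b
        simp only [PairLang.pairMul, append_wellOrdered_iff, append_eq_eps_iff]
        tauto
      have hpe : ∀ a b : Word A × Word A,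
          ((PairLang.pairMul a b).1 = Word.eps A ∧ (PairLang.pairMul a b).2 = Word.eps A) ↔
            ((a.1 = Word.eps A ∧ a.2 = Word.eps A) ∧ (b.1 = Word.eps A ∧ b.2 = Word.eps A)) := by
        intro a b
        simp only [PairLang.pairMul, append_eq_eps_iff]
        tauto
      refine ⟨?_, ?_, ?_⟩
      · rw [← and_bool n1 n2]
        constructor
        · rintro ⟨r, a, ha, b, hb, rfl⟩
          exact ⟨⟨a, ha⟩, ⟨b, hb⟩⟩
        · rintro ⟨⟨a, ha⟩, ⟨b, hb⟩⟩
          exact ⟨_, a, ha, b, hb, rfl⟩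
      · rw [← or3_bool n1 n2 (and_bool w1 w2), ← forall2_iff]
        constructor
        · intro hall a ha b hb
          exact (hpm a b).1 (hall _ ⟨a, ha, b, hb, rfl⟩)
        · rintro hall r ⟨a, ha, b, hb, rfl⟩
          exact (hpm a b).2 (hall a ha b hb)
      · rw [← or3_bool n1 n2 (and_bool e1 e2), ← forall2_iff]
        constructor
        · intro hall a ha b hb
          exact (hpe a b).1 (hall _ ⟨a, ha, b, hb, rfl⟩)
        · rintro hall r ⟨a, ha, b, hb, rfl⟩
          exact (hpe a b).2 (hall a ha b hb)
    | star p =>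
      intro ρ σ h
      obtain ⟨hn, hH, hB⟩ := PS.exact p ρ σ h
      simp only [PS.den, PS.aeval, aStar]
      have hmem0 : (Word.eps A, Word.eps A) ∈ PairLang.star (p.den ρ) :=
        ⟨[], fun q hq => absurd hq List.not_mem_nil, rfl⟩
      refine ⟨?_, ?_, ?_⟩
      · simpa using ⟨_, hmem0⟩
      · rw [← hH]
        constructor
        · intro hall q hq
          obtain ⟨u, v⟩ := q
          have hm : PairLang.pairMul (u, v) (Word.eps A, Word.eps A) ∈
              PairLang.star (p.den ρ) :=
            ⟨[(u, v)], fun r hr => by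
              rw [List.mem_singleton] at hr; rw [hr]; exact hq, rfl⟩
          have := hall _ hm
          exact ⟨((append_wellOrdered_iff u (Word.eps A)).1 this.1).1,
            ((append_eq_eps_iff (Word.eps A) v).1 this.2).2⟩
        · rintro hP r ⟨l, hl, rfl⟩
          exact star_fold_H hP l hl
      · rw [← hB]
        constructor
        · intro hall q hq
          obtain ⟨u, v⟩ := q
          have hm : PairLang.pairMul (u, v) (Word.eps A, Word.eps A) ∈
              PairLang.star (p.den ρ) :=
            ⟨[(u, v)], fun r hr => by
              rw [List.mem_singleton] at hr; rw [hr]; exact hq, rfl⟩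
          have := hall _ hm
          exact ⟨((append_eq_eps_iff u (Word.eps A)).1 this.1).1,
            ((append_eq_eps_iff (Word.eps A) v).1 this.2).2⟩
        · rintro hP r ⟨l, hl, rfl⟩
          exact star_fold_B hP l hl
end
/-! ### A numeric mirror of the abstract evaluator -/

theorem unpair_snd_lt {n : ℕ} (h : n.unpair.1 ≠ 0) : n.unpair.2 < n := by
  have h1 : Nat.pair n.unpair.1 n.unpair.2 = n := Nat.pair_unpair n
  have hpos : 1 ≤ n.unpair.1 := Nat.one_le_iff_ne_zero.2 h
  set k := n.unpair.1 with hk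
  set m := n.unpair.2 with hm
  rw [← h1]
  unfold Nat.pair
  split_ifs with hlt
  · have h2 : 2 ≤ m := by omega
    have h3 : 2 * m ≤ m * m := Nat.mul_le_mul_right m h2
    omega
  · have h2 : 1 ≤ k * k := Nat.one_le_iff_ne_zero.2 (by positivity)
    omega

def evalN : ℕ → (ℕ → B3) → B3
  | n, σ =>
    if h0 : n.unpair.1 = 0 then aLetter
    else if n.unpair.1 = 1 then aEpsA
    else if n.unpair.1 = 2 then σ n.unpair.2
    else if n.unpair.1 = 3 then
      aAdd (evalN n.unpair.2.unpair.1 σ) (evalN n.unpair.2.unpair.2 σ)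
    else if n.unpair.1 = 4 then
      aMul (evalN n.unpair.2.unpair.1 σ) (evalN n.unpair.2.unpair.2 σ)
    else if n.unpair.1 = 5 then
      aIterate (fun b => evalN n.unpair.2.unpair.2 (Function.update σ n.unpair.2.unpair.1 b))
    else if n.unpair.1 = 6 then aOmega (evalN n.unpair.2 σ)
    else if n.unpair.1 = 7 then
      aPair (evalN n.unpair.2.unpair.1 σ) (evalN n.unpair.2.unpair.2 σ)
    else if n.unpair.1 = 8 then
      aAdd (evalN n.unpair.2.unpair.1 σ) (evalN n.unpair.2.unpair.2 σ)
    else if n.unpair.1 = 9 then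
      aMul (evalN n.unpair.2.unpair.1 σ) (evalN n.unpair.2.unpair.2 σ)
    else if n.unpair.1 = 10 then aStar (evalN n.unpair.2 σ)
    else aBot
  termination_by n _ => n
  decreasing_by
    all_goals first
      | exact lt_of_le_of_lt (Nat.unpair_left_le _) (unpair_snd_lt h0)
      | exact lt_of_le_of_lt (Nat.unpair_right_le _) (unpair_snd_lt h0)
      | exact unpair_snd_lt h0
theorem evalN_unfold (n : ℕ) (σ : ℕ → B3) :
    evalN n σ =
    if n.unpair.1 = 0 then aLetter
    else if n.unpair.1 = 1 then aEpsA
    else if n.unpair.1 = 2 then σ n.unpair.2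
    else if n.unpair.1 = 3 then
      aAdd (evalN n.unpair.2.unpair.1 σ) (evalN n.unpair.2.unpair.2 σ)
    else if n.unpair.1 = 4 then
      aMul (evalN n.unpair.2.unpair.1 σ) (evalN n.unpair.2.unpair.2 σ)
    else if n.unpair.1 = 5 then
      aIterate (fun b => evalN n.unpair.2.unpair.2 (Function.update σ n.unpair.2.unpair.1 b))
    else if n.unpair.1 = 6 then aOmega (evalN n.unpair.2 σ)
    else if n.unpair.1 = 7 then
      aPair (evalN n.unpair.2.unpair.1 σ) (evalN n.unpair.2.unpair.2 σ)
    else if n.unpair.1 = 8 then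
      aAdd (evalN n.unpair.2.unpair.1 σ) (evalN n.unpair.2.unpair.2 σ)
    else if n.unpair.1 = 9 then
      aMul (evalN n.unpair.2.unpair.1 σ) (evalN n.unpair.2.unpair.2 σ)
    else if n.unpair.1 = 10 then aStar (evalN n.unpair.2 σ)
    else aBot := by
  rw [evalN]; simp only [dite_eq_ite]
theorem evalN_loc : ∀ (n : ℕ) (σ σ' : ℕ → B3), (∀ x, x ≤ n → σ x = σ' x) →
    evalN n σ = evalN n σ' := by
  intro n
  induction n using Nat.strong_induction_on with
  | _ n ih =>
    intro σ σ' h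
    have hrec2 : n.unpair.1 ≠ 0 →
        evalN n.unpair.2.unpair.1 σ = evalN n.unpair.2.unpair.1 σ' ∧
          evalN n.unpair.2.unpair.2 σ = evalN n.unpair.2.unpair.2 σ' := by
      intro h0
      have hm : n.unpair.2 < n := unpair_snd_lt h0
      have hm1 : n.unpair.2.unpair.1 < n := lt_of_le_of_lt (Nat.unpair_left_le _) hm
      have hm2 : n.unpair.2.unpair.2 < n := lt_of_le_of_lt (Nat.unpair_right_le _) hm
      exact ⟨ih _ hm1 σ σ' (fun x hx => h x (by omega)),
        ih _ hm2 σ σ' (fun x hx => h x (by omega))⟩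
    have hrec1 : n.unpair.1 ≠ 0 → evalN n.unpair.2 σ = evalN n.unpair.2 σ' := by
      intro h0
      have hm : n.unpair.2 < n := unpair_snd_lt h0
      exact ih _ hm σ σ' (fun x hx => h x (by omega))
    have hmu : n.unpair.1 ≠ 0 →
        (fun b => evalN n.unpair.2.unpair.2 (Function.update σ n.unpair.2.unpair.1 b)) =
          (fun b => evalN n.unpair.2.unpair.2 (Function.update σ' n.unpair.2.unpair.1 b)) := by
      intro h0
      have hm : n.unpair.2 < n := unpair_snd_lt h0
      have hm2 : n.unpair.2.unpair.2 < n := lt_of_le_of_lt (Nat.unpair_right_le _) hm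
      funext b
      apply ih _ hm2
      intro y hy
      by_cases hyx : y = n.unpair.2.unpair.1
      · subst hyx; simp [Function.update_self]
      · rw [Function.update_of_ne hyx, Function.update_of_ne hyx]
        exact h y (by omega)
    rw [evalN_unfold n σ, evalN_unfold n σ']
    by_cases h0 : n.unpair.1 = 0
    · rw [if_pos h0, if_pos h0]
    rw [if_neg h0, if_neg h0]
    by_cases h1 : n.unpair.1 = 1
    · rw [if_pos h1, if_pos h1]
    rw [if_neg h1, if_neg h1]
    by_cases h2 : n.unpair.1 = 2
    · rw [if_pos h2, if_pos h2]; exact h _ (Nat.unpair_right_le n)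
    rw [if_neg h2, if_neg h2]
    by_cases h3 : n.unpair.1 = 3
    · rw [if_pos h3, if_pos h3, (hrec2 h0).1, (hrec2 h0).2]
    rw [if_neg h3, if_neg h3]
    by_cases h4 : n.unpair.1 = 4
    · rw [if_pos h4, if_pos h4, (hrec2 h0).1, (hrec2 h0).2]
    rw [if_neg h4, if_neg h4]
    by_cases h5 : n.unpair.1 = 5
    · rw [if_pos h5, if_pos h5, hmu h0]
    rw [if_neg h5, if_neg h5]
    by_cases h6 : n.unpair.1 = 6
    · rw [if_pos h6, if_pos h6, hrec1 h0]
    rw [if_neg h6, if_neg h6]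
    by_cases h7 : n.unpair.1 = 7
    · rw [if_pos h7, if_pos h7, (hrec2 h0).1, (hrec2 h0).2]
    rw [if_neg h7, if_neg h7]
    by_cases h8 : n.unpair.1 = 8
    · rw [if_pos h8, if_pos h8, (hrec2 h0).1, (hrec2 h0).2]
    rw [if_neg h8, if_neg h8]
    by_cases h9 : n.unpair.1 = 9
    · rw [if_pos h9, if_pos h9, (hrec2 h0).1, (hrec2 h0).2]
    rw [if_neg h9, if_neg h9]
    by_cases h10 : n.unpair.1 = 10
    · rw [if_pos h10, if_pos h10, hrec1 h0]
    rw [if_neg h10, if_neg h10]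

mutual
  theorem TS.evalN_code {A : Type} [Encodable A] (t : TS A) :
      ∀ σ : ℕ → B3, evalN t.code σ = t.aeval σ := by
    cases t with
    | letter a =>
      intro σ
      rw [TS.code, evalN_unfold]
      simp [Nat.unpair_pair, TS.aeval]
    | eps =>
      intro σ
      rw [TS.code, evalN_unfold]
      simp [Nat.unpair_pair, TS.aeval]
    | var x =>
      intro σ
      rw [TS.code, evalN_unfold]
      simp [Nat.unpair_pair, TS.aeval]
    | add s t =>
      intro σ
      rw [TS.code, evalN_unfold]
      simp only [Nat.unpair_pair]
      norm_num
      rw [TS.evalN_code s σ, TS.evalN_code t σ]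
      simp [TS.aeval]
    | mul s t =>
      intro σ
      rw [TS.code, evalN_unfold]
      simp only [Nat.unpair_pair]
      norm_num
      rw [TS.evalN_code s σ, TS.evalN_code t σ]
      simp [TS.aeval]
    | mu x s =>
      intro σ
      rw [TS.code, evalN_unfold]
      simp only [Nat.unpair_pair]
      norm_num
      have hfun : (fun b => evalN (TS.code s) (Function.update σ x b)) =
          (fun b => s.aeval (Function.update σ x b)) := by
        funext b
        exact TS.evalN_code s _
      rw [hfun]
      simp [TS.aeval]
    | omega p =>
      intro σ
      rw [TS.code, evalN_unfold]
      simp only [Nat.unpair_pair]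
      norm_num
      rw [PS.evalN_code p σ]
      simp [TS.aeval]

  theorem PS.evalN_code {A : Type} [Encodable A] (p : PS A) :
      ∀ σ : ℕ → B3, evalN p.code σ = p.aeval σ := by
    cases p with
    | pair s t =>
      intro σ
      rw [PS.code, evalN_unfold]
      simp only [Nat.unpair_pair]
      norm_num
      rw [TS.evalN_code s σ, TS.evalN_code t σ]
      simp [PS.aeval]
    | add p q =>
      intro σ
      rw [PS.code, evalN_unfold]
      simp only [Nat.unpair_pair]
      norm_num
      rw [PS.evalN_code p σ, PS.evalN_code q σ]
      simp [PS.aeval]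
    | mul p q =>
      intro σ
      rw [PS.code, evalN_unfold]
      simp only [Nat.unpair_pair]
      norm_num
      rw [PS.evalN_code p σ, PS.evalN_code q σ]
      simp [PS.aeval]
    | star p =>
      intro σ
      rw [PS.code, evalN_unfold]
      simp only [Nat.unpair_pair]
      norm_num
      rw [PS.evalN_code p σ]
      simp [PS.aeval]
end
/-! ### Numeric encodings of environments -/

def dig (e x : ℕ) : ℕ := e / 8 ^ x % 8

def db (d : ℕ) : B3 := (d % 2 == 1, d / 2 % 2 == 0, d / 4 % 2 == 0)

def eb (b : B3) : ℕ := (cond b.1 1 0) + 2 * (cond b.2.1 0 1) + 4 * (cond b.2.2 0 1)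

def dEnv (e : ℕ) : ℕ → B3 := fun x => db (dig e x)

def setdig (e x d : ℕ) : ℕ := e % 8 ^ x + d * 8 ^ x + e / 8 ^ (x + 1) * 8 ^ (x + 1)

theorem db_eb : ∀ b : B3, db (eb b) = b := by decide

theorem eb_lt : ∀ b : B3, eb b < 8 := by decide

theorem dEnv_zero : dEnv 0 = fun _ => aBot := by
  funext x
  simp [dEnv, dig, db, aBot]

theorem dig_mod (e k x : ℕ) (hx : x ≤ k) : dig (e % 8 ^ (k + 1)) x = dig e x := by
  unfold dig
  have h1 : (8 : ℕ) ^ (k + 1) = 8 ^ x * 8 ^ (k + 1 - x) := by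
    rw [← pow_add]
    congr 1
    omega
  rw [h1, Nat.mod_mul_right_div_self]
  have h2 : (8 : ℕ) ∣ 8 ^ (k + 1 - x) := dvd_pow_self 8 (by omega)
  rw [Nat.mod_mod_of_dvd _ h2]

theorem dig_setdig_self (e x d : ℕ) (hd : d < 8) : dig (setdig e x d) x = d := by
  unfold dig setdig
  have h8 : 0 < (8 : ℕ) ^ x := pow_pos (by norm_num) x
  have h1 : e % 8 ^ x + d * 8 ^ x + e / 8 ^ (x + 1) * 8 ^ (x + 1)
      = e % 8 ^ x + (d + 8 * (e / 8 ^ (x + 1))) * 8 ^ x := by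
    rw [pow_succ]
    ring
  rw [h1, Nat.add_mul_div_right _ _ h8, Nat.div_eq_of_lt (Nat.mod_lt _ h8), zero_add,
    Nat.add_mul_mod_self_left, Nat.mod_eq_of_lt hd]

theorem dig_setdig_lt (e x d y : ℕ) (hy : y < x) : dig (setdig e x d) y = dig e y := by
  have hdig : ∀ a : ℕ, dig a y = a % (8 ^ y * 8) / 8 ^ y := by
    intro a
    unfold dig
    rw [Nat.mod_mul_right_div_self]
  have hmod : setdig e x d % (8 ^ y * 8) = e % (8 ^ y * 8) := by
    unfold setdig
    have hyx : (8 : ℕ) ^ y * 8 = 8 ^ (y + 1) := by rw [pow_succ]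
    rw [hyx]
    have hdvd : (8 : ℕ) ^ (y + 1) ∣ 8 ^ x := pow_dvd_pow 8 (by omega)
    have hdvd2 : (8 : ℕ) ^ (y + 1) ∣ d * 8 ^ x + e / 8 ^ (x + 1) * 8 ^ (x + 1) :=
      dvd_add (Dvd.dvd.mul_left hdvd d) (Dvd.dvd.mul_left (pow_dvd_pow 8 (by omega)) _)
    obtain ⟨c, hc⟩ := hdvd2
    rw [add_assoc, hc, Nat.add_mul_mod_self_left, Nat.mod_mod_of_dvd _ hdvd]
  rw [hdig, hdig, hmod]

theorem dig_setdig_gt (e x d y : ℕ) (hd : d < 8) (hy : x < y) :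
    dig (setdig e x d) y = dig e y := by
  have hdiv : setdig e x d / 8 ^ (x + 1) = e / 8 ^ (x + 1) := by
    unfold setdig
    have h1 : e % 8 ^ x < 8 ^ x := Nat.mod_lt _ (pow_pos (by norm_num) x)
    have h2 : d * 8 ^ x ≤ 7 * 8 ^ x := Nat.mul_le_mul_right _ (by omega)
    have hlt : e % 8 ^ x + d * 8 ^ x < 8 ^ (x + 1) := by
      rw [pow_succ]
      omega
    rw [Nat.add_mul_div_right _ _ (pow_pos (by norm_num) (x + 1)), Nat.div_eq_of_lt hlt,
      zero_add]
  have hstep : ∀ a : ℕ, dig a y = a / 8 ^ (x + 1) / 8 ^ (y - (x + 1)) % 8 := by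
    intro a
    unfold dig
    rw [Nat.div_div_eq_div_mul, ← pow_add, show x + 1 + (y - (x + 1)) = y by omega]
  rw [hstep, hstep, hdiv]

theorem dEnv_setdig (e x : ℕ) (b : B3) :
    dEnv (setdig e x (eb b)) = Function.update (dEnv e) x b := by
  funext y
  rcases lt_trichotomy y x with hy | rfl | hy
  · rw [Function.update_of_ne (by omega)]
    unfold dEnv
    rw [dig_setdig_lt _ _ _ _ hy]
  · rw [Function.update_self]
    unfold dEnv
    rw [dig_setdig_self _ _ _ (eb_lt b), db_eb]
  · rw [Function.update_of_ne (by omega)]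
    unfold dEnv
    rw [dig_setdig_gt _ _ _ _ (eb_lt b) hy]

theorem dEnv_mod (e k : ℕ) : ∀ x, x ≤ k → dEnv (e % 8 ^ (k + 1)) x = dEnv e x := by
  intro x hx
  unfold dEnv
  rw [dig_mod e k x hx]

/-! ### The table of all abstract values -/

def tbl (n : ℕ) : List B3 := (List.range (8 ^ (n + 1))).map (fun e => evalN n (dEnv e))

def lookupT (L : List (List B3)) (m e : ℕ) : B3 :=
  (L.getD m []).getD (e % 8 ^ (m + 1)) aBot

def nodeT (L : List (List B3)) (n e : ℕ) : B3 :=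
  if n.unpair.1 = 0 then aLetter
  else if n.unpair.1 = 1 then aEpsA
  else if n.unpair.1 = 2 then dEnv e n.unpair.2
  else if n.unpair.1 = 3 then
    aAdd (lookupT L n.unpair.2.unpair.1 e) (lookupT L n.unpair.2.unpair.2 e)
  else if n.unpair.1 = 4 then
    aMul (lookupT L n.unpair.2.unpair.1 e) (lookupT L n.unpair.2.unpair.2 e)
  else if n.unpair.1 = 5 then
    aIterate (fun b => lookupT L n.unpair.2.unpair.2
      (setdig (e % 8 ^ (n.unpair.2.unpair.2 + 1)) n.unpair.2.unpair.1 (eb b)))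
  else if n.unpair.1 = 6 then aOmega (lookupT L n.unpair.2 e)
  else if n.unpair.1 = 7 then
    aPair (lookupT L n.unpair.2.unpair.1 e) (lookupT L n.unpair.2.unpair.2 e)
  else if n.unpair.1 = 8 then
    aAdd (lookupT L n.unpair.2.unpair.1 e) (lookupT L n.unpair.2.unpair.2 e)
  else if n.unpair.1 = 9 then
    aMul (lookupT L n.unpair.2.unpair.1 e) (lookupT L n.unpair.2.unpair.2 e)
  else if n.unpair.1 = 10 then aStar (lookupT L n.unpair.2 e)
  else aBot

def stepT (L : List (List B3)) : List B3 :=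
  (List.range (8 ^ (L.length + 1))).map (nodeT L L.length)

theorem lookupT_correct (n m e : ℕ) (hm : m < n) :
    lookupT ((List.range n).map tbl) m e = evalN m (dEnv e) := by
  unfold lookupT
  have h1 : ((List.range n).map tbl).getD m [] = tbl m := by
    rw [List.getD_eq_getElem?_getD, List.getElem?_map, List.getElem?_range hm]
    rfl
  rw [h1]
  unfold tbl
  have he : e % 8 ^ (m + 1) < 8 ^ (m + 1) := Nat.mod_lt _ (pow_pos (by norm_num) _)
  rw [List.getD_eq_getElem?_getD, List.getElem?_map, List.getElem?_range he]
  show evalN m (dEnv (e % 8 ^ (m + 1))) = evalN m (dEnv e)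
  exact evalN_loc m _ _ (dEnv_mod e m)

theorem nodeT_correct (n e : ℕ) :
    nodeT ((List.range n).map tbl) n e = evalN n (dEnv e) := by
  unfold nodeT
  rw [evalN_unfold]
  by_cases h0 : n.unpair.1 = 0
  · rw [if_pos h0, if_pos h0]
  rw [if_neg h0, if_neg h0]
  have hm : n.unpair.2 < n := unpair_snd_lt h0
  have hm1 : n.unpair.2.unpair.1 < n := lt_of_le_of_lt (Nat.unpair_left_le _) hm
  have hm2 : n.unpair.2.unpair.2 < n := lt_of_le_of_lt (Nat.unpair_right_le _) hm
  have hl1 := lookupT_correct n n.unpair.2.unpair.1 e hm1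
  have hl2 := lookupT_correct n n.unpair.2.unpair.2 e hm2
  have hl := lookupT_correct n n.unpair.2 e hm
  have hmu : (fun b => lookupT ((List.range n).map tbl) n.unpair.2.unpair.2
      (setdig (e % 8 ^ (n.unpair.2.unpair.2 + 1)) n.unpair.2.unpair.1 (eb b))) =
      (fun b => evalN n.unpair.2.unpair.2 (Function.update (dEnv e) n.unpair.2.unpair.1 b)) := by
    funext b
    rw [lookupT_correct n n.unpair.2.unpair.2 _ hm2, dEnv_setdig]
    apply evalN_loc
    intro y hy
    by_cases hyx : y = n.unpair.2.unpair.1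
    · subst hyx; simp [Function.update_self]
    · rw [Function.update_of_ne hyx, Function.update_of_ne hyx]
      exact dEnv_mod e n.unpair.2.unpair.2 y hy
  by_cases h1 : n.unpair.1 = 1
  · rw [if_pos h1, if_pos h1]
  rw [if_neg h1, if_neg h1]
  by_cases h2 : n.unpair.1 = 2
  · rw [if_pos h2, if_pos h2]
  rw [if_neg h2, if_neg h2]
  by_cases h3 : n.unpair.1 = 3
  · rw [if_pos h3, if_pos h3, hl1, hl2]
  rw [if_neg h3, if_neg h3]
  by_cases h4 : n.unpair.1 = 4
  · rw [if_pos h4, if_pos h4, hl1, hl2]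
  rw [if_neg h4, if_neg h4]
  by_cases h5 : n.unpair.1 = 5
  · rw [if_pos h5, if_pos h5, hmu]
  rw [if_neg h5, if_neg h5]
  by_cases h6 : n.unpair.1 = 6
  · rw [if_pos h6, if_pos h6, hl]
  rw [if_neg h6, if_neg h6]
  by_cases h7 : n.unpair.1 = 7
  · rw [if_pos h7, if_pos h7, hl1, hl2]
  rw [if_neg h7, if_neg h7]
  by_cases h8 : n.unpair.1 = 8
  · rw [if_pos h8, if_pos h8, hl1, hl2]
  rw [if_neg h8, if_neg h8]
  by_cases h9 : n.unpair.1 = 9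
  · rw [if_pos h9, if_pos h9, hl1, hl2]
  rw [if_neg h9, if_neg h9]
  by_cases h10 : n.unpair.1 = 10
  · rw [if_pos h10, if_pos h10, hl]
  rw [if_neg h10, if_neg h10]

theorem stepT_correct (n : ℕ) : stepT ((List.range n).map tbl) = tbl n := by
  unfold stepT
  have hlen : ((List.range n).map tbl).length = n := by simp
  rw [hlen]
  unfold tbl
  exact List.map_congr_left (fun e _ => nodeT_correct n e)
/-! ### Primitive recursiveness of the table -/

section PrimrecPart

open Primrec

theorem hpow : Primrec₂ (fun a b : ℕ => a ^ b) :=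
  Primrec₂.unpaired.mp (Primrec.nat_iff.mpr Nat.Primrec.pow)

theorem hdig : Primrec₂ dig := by
  unfold dig
  exact Primrec.nat_mod.comp₂
    (Primrec.nat_div.comp₂ Primrec₂.left (hpow.comp₂ (Primrec₂.const 8) Primrec₂.right))
    (Primrec₂.const 8)

theorem hdb : Primrec db := by
  unfold db
  refine Primrec.pair ?_ (Primrec.pair ?_ ?_)
  · exact Primrec.beq.comp (Primrec.nat_mod.comp .id (const 2)) (const 1)
  · exact Primrec.beq.comp
      (Primrec.nat_mod.comp (Primrec.nat_div.comp .id (const 2)) (const 2)) (const 0)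
  · exact Primrec.beq.comp
      (Primrec.nat_mod.comp (Primrec.nat_div.comp .id (const 4)) (const 2)) (const 0)

theorem hdEnv : Primrec₂ dEnv := by
  unfold dEnv
  exact (hdb.comp (hdig.comp fst snd)).to₂

theorem hsetdig : Primrec (fun t : ℕ × ℕ × ℕ => setdig t.1 t.2.1 t.2.2) := by
  unfold setdig
  have he : Primrec (fun t : ℕ × ℕ × ℕ => t.1) := fst
  have hx : Primrec (fun t : ℕ × ℕ × ℕ => t.2.1) := fst.comp snd
  have hd : Primrec (fun t : ℕ × ℕ × ℕ => t.2.2) := snd.comp snd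
  have hp1 : Primrec (fun t : ℕ × ℕ × ℕ => (8 : ℕ) ^ t.2.1) := hpow.comp (const 8) hx
  have hp2 : Primrec (fun t : ℕ × ℕ × ℕ => (8 : ℕ) ^ (t.2.1 + 1)) :=
    hpow.comp (const 8) (succ.comp hx)
  exact Primrec.nat_add.comp
    (Primrec.nat_add.comp (Primrec.nat_mod.comp he hp1) (Primrec.nat_mul.comp hd hp1))
    (Primrec.nat_mul.comp (Primrec.nat_div.comp he hp2) hp2)

theorem hlookup : Primrec (fun t : List (List B3) × ℕ × ℕ => lookupT t.1 t.2.1 t.2.2) := by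
  unfold lookupT
  have hL : Primrec (fun t : List (List B3) × ℕ × ℕ => t.1) := fst
  have hm : Primrec (fun t : List (List B3) × ℕ × ℕ => t.2.1) := fst.comp snd
  have he : Primrec (fun t : List (List B3) × ℕ × ℕ => t.2.2) := snd.comp snd
  have h1 : Primrec (fun t : List (List B3) × ℕ × ℕ => t.1.getD t.2.1 ([] : List B3)) :=
    (Primrec.list_getD ([] : List B3)).comp hL hm
  have h2 : Primrec (fun t : List (List B3) × ℕ × ℕ => t.2.2 % 8 ^ (t.2.1 + 1)) :=
    Primrec.nat_mod.comp he (hpow.comp (const 8) (succ.comp hm))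
  exact (Primrec.list_getD aBot).comp h1 h2

theorem haAdd : Primrec₂ aAdd := (Primrec.dom_finite (fun p : B3 × B3 => aAdd p.1 p.2)).to₂.of_eq (fun a b => rfl)
theorem haMul : Primrec₂ aMul := (Primrec.dom_finite (fun p : B3 × B3 => aMul p.1 p.2)).to₂.of_eq (fun a b => rfl)
theorem haPair : Primrec₂ aPair := (Primrec.dom_finite (fun p : B3 × B3 => aPair p.1 p.2)).to₂.of_eq (fun a b => rfl)
theorem haStar : Primrec aStar := Primrec.dom_finite _
theorem haOmega : Primrec aOmega := Primrec.dom_finite _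
theorem heb : Primrec eb := Primrec.dom_finite _

theorem hnode : Primrec (fun t : List (List B3) × ℕ × ℕ => nodeT t.1 t.2.1 t.2.2) := by
  have hL : Primrec (fun t : List (List B3) × ℕ × ℕ => t.1) := fst
  have hn : Primrec (fun t : List (List B3) × ℕ × ℕ => t.2.1) := fst.comp snd
  have he : Primrec (fun t : List (List B3) × ℕ × ℕ => t.2.2) := snd.comp snd
  have hk : Primrec (fun t : List (List B3) × ℕ × ℕ => t.2.1.unpair.1) :=
    fst.comp (Primrec.unpair.comp hn)
  have hm : Primrec (fun t : List (List B3) × ℕ × ℕ => t.2.1.unpair.2) :=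
    snd.comp (Primrec.unpair.comp hn)
  have hm1 : Primrec (fun t : List (List B3) × ℕ × ℕ => t.2.1.unpair.2.unpair.1) :=
    fst.comp (Primrec.unpair.comp hm)
  have hm2 : Primrec (fun t : List (List B3) × ℕ × ℕ => t.2.1.unpair.2.unpair.2) :=
    snd.comp (Primrec.unpair.comp hm)
  have hlk : ∀ {mf : List (List B3) × ℕ × ℕ → ℕ}, Primrec mf →
      Primrec (fun t : List (List B3) × ℕ × ℕ => lookupT t.1 (mf t) t.2.2) := by
    intro mf hmf
    exact hlookup.comp (Primrec.pair hL (Primrec.pair hmf he))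
  have hl1 := hlk hm1
  have hl2 := hlk hm2
  have hl := hlk hm
  have hcond : ∀ (c : ℕ), PrimrecPred (fun t : List (List B3) × ℕ × ℕ => t.2.1.unpair.1 = c) :=
    fun c => PrimrecRel.comp Primrec.eq hk (const c)
  -- the μ branch
  have hF : Primrec₂ (fun (t : List (List B3) × ℕ × ℕ) (b : B3) =>
      lookupT t.1 t.2.1.unpair.2.unpair.2
        (setdig (t.2.2 % 8 ^ (t.2.1.unpair.2.unpair.2 + 1)) t.2.1.unpair.2.unpair.1 (eb b))) := by
    have hLb : Primrec (fun p : (List (List B3) × ℕ × ℕ) × B3 => p.1.1) := fst.comp fst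
    have hm2b : Primrec (fun p : (List (List B3) × ℕ × ℕ) × B3 => p.1.2.1.unpair.2.unpair.2) :=
      hm2.comp fst
    have hm1b : Primrec (fun p : (List (List B3) × ℕ × ℕ) × B3 => p.1.2.1.unpair.2.unpair.1) :=
      hm1.comp fst
    have heb' : Primrec (fun p : (List (List B3) × ℕ × ℕ) × B3 => eb p.2) := heb.comp snd
    have hemod : Primrec (fun p : (List (List B3) × ℕ × ℕ) × B3 =>
        p.1.2.2 % 8 ^ (p.1.2.1.unpair.2.unpair.2 + 1)) :=
      Primrec.nat_mod.comp (he.comp fst) (hpow.comp (const 8) (succ.comp hm2b))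
    have hset : Primrec (fun p : (List (List B3) × ℕ × ℕ) × B3 =>
        setdig (p.1.2.2 % 8 ^ (p.1.2.1.unpair.2.unpair.2 + 1)) p.1.2.1.unpair.2.unpair.1
          (eb p.2)) :=
      hsetdig.comp (Primrec.pair hemod (Primrec.pair hm1b heb'))
    exact (hlookup.comp (Primrec.pair hLb (Primrec.pair hm2b hset))).to₂
  have hmu : Primrec (fun t : List (List B3) × ℕ × ℕ =>
      aIterate (fun b => lookupT t.1 t.2.1.unpair.2.unpair.2
        (setdig (t.2.2 % 8 ^ (t.2.1.unpair.2.unpair.2 + 1)) t.2.1.unpair.2.unpair.1 (eb b)))) := by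
    have h4 := hF.comp .id (hF.comp .id (hF.comp .id (hF.comp .id (const aBot))))
    exact h4.of_eq (fun t => rfl)
  unfold nodeT
  refine Primrec.ite (hcond 0) (const aLetter) ?_
  refine Primrec.ite (hcond 1) (const aEpsA) ?_
  refine Primrec.ite (hcond 2) (hdEnv.comp he hm) ?_
  refine Primrec.ite (hcond 3) (haAdd.comp hl1 hl2) ?_
  refine Primrec.ite (hcond 4) (haMul.comp hl1 hl2) ?_
  refine Primrec.ite (hcond 5) hmu ?_
  refine Primrec.ite (hcond 6) (haOmega.comp hl) ?_
  refine Primrec.ite (hcond 7) (haPair.comp hl1 hl2) ?_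
  refine Primrec.ite (hcond 8) (haAdd.comp hl1 hl2) ?_
  refine Primrec.ite (hcond 9) (haMul.comp hl1 hl2) ?_
  exact Primrec.ite (hcond 10) (haStar.comp hl) (const aBot)

theorem hstep : Primrec stepT := by
  unfold stepT
  have hrange : Primrec (fun L : List (List B3) => List.range (8 ^ (L.length + 1))) :=
    Primrec.list_range.comp (hpow.comp (const 8) (succ.comp Primrec.list_length))
  have hg : Primrec₂ (fun (L : List (List B3)) (e : ℕ) => nodeT L L.length e) :=
    (hnode.comp (Primrec.pair fst (Primrec.pair (Primrec.list_length.comp fst) snd))).to₂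
  exact Primrec.list_map hrange hg

theorem htbl : Primrec tbl := by
  have hg : Primrec₂ (fun (_ : Unit) (L : List (List B3)) => some (stepT L)) :=
    (Primrec.option_some.comp (hstep.comp snd)).to₂
  have H : ∀ (a : Unit) (n : ℕ),
      (fun (_ : Unit) (L : List (List B3)) => some (stepT L)) a
        (((List.range n)).map ((fun (_ : Unit) => tbl) a)) = some (tbl n) := by
    intro a n
    simp only
    rw [stepT_correct]
  have h2 : Primrec₂ (fun (_ : Unit) (n : ℕ) => tbl n) :=
    Primrec.nat_strong_rec _ hg H
  exact h2.comp (const ()) Primrec.id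

theorem hfinal : Primrec (fun n => ((tbl n).getD 0 aBot).2.1) := by
  have h1 : Primrec (fun n => (tbl n).getD 0 aBot) :=
    (Primrec.list_getD aBot).comp htbl (const 0)
  exact fst.comp (snd.comp h1)

end PrimrecPart
/-- It is decidable, given a closed `μωT_s`-expression `t` of syntactic category `T` over
`Σ`, whether the language denoted by `t` consists of well-ordered words only: there is a
computable function on the codes of expressions deciding this property. -/
theorem decidable_wellOrdered_denotation (Alph : Type) [Fintype Alph] [Nonempty Alph]
    [Encodable Alph] :
    ∃ f : ℕ → Bool, Computable f ∧
      ∀ t : TS Alph, t.free = ∅ →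
        (f t.code = true ↔ ∀ w ∈ t.den (fun _ => ∅), w.IsWellOrdered) := by
  refine ⟨fun n => ((tbl n).getD 0 aBot).2.1, hfinal.to_comp, ?_⟩
  intro t _
  have h1 : ((tbl t.code).getD 0 aBot) = evalN t.code (dEnv 0) := by
    unfold tbl
    have h0 : 0 < 8 ^ (t.code + 1) := pow_pos (by norm_num) _
    rw [List.getD_eq_getElem?_getD, List.getElem?_map, List.getElem?_range h0]
    rfl
  have h2 : REnv (A := Alph) (fun _ => ∅) (fun _ => aBot) := by
    intro x
    refine ⟨?_, ?_, ?_⟩ <;> simp [aBot]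
  have h3 := TS.exact t (fun _ => ∅) (fun _ => aBot) h2
  show ((tbl t.code).getD 0 aBot).2.1 = true ↔ _
  rw [h1, dEnv_zero, TS.evalN_code]
  exact h3.2.1.symm
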